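/- Let D be a positive squarefree integer and R_D the ring of integers of Q(i√D). There are only finitely many triples (μ₁, μ₂, μ₃) of elements of R_D \ {0, 1} satisfying 1/μ₁ + 1/μ₂ + 1/μ₃ = 1. -/

import Mathlib

open Polynomial

/-- The generator of the ring of integers of `ℚ(i√D)`. -/
noncomputable def alphaD (D : ℕ) : ℂ :=
  if D % 4 = 3 then (1 + Complex.I * Real.sqrt D) / 2 else Complex.I * Real.sqrt D

/-- The ring of integers `R_D = ℤ[α_D]` of `ℚ(i√D)`, viewed as a subset of `ℂ`. -/
noncomputable def RD (D : ℕ) : Set ℂ :=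
  {z | ∃ x y : ℤ, z = (x : ℂ) + (y : ℂ) * alphaD D}

lemma alphaD_re_im (D : ℕ) :
    (alphaD D).re = (if D % 4 = 3 then (1:ℝ)/2 else 0) ∧
    (alphaD D).im = (if D % 4 = 3 then Real.sqrt D / 2 else Real.sqrt D) := by
  unfold alphaD
  split_ifs <;> simp [Complex.div_re, Complex.div_im, Complex.normSq] <;> ring

lemma RD_sub {D : ℕ} {a b : ℂ} (ha : a ∈ RD D) (hb : b ∈ RD D) : a - b ∈ RD D := by
  obtain ⟨x1, y1, rfl⟩ := ha
  obtain ⟨x2, y2, rfl⟩ := hb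
  exact ⟨x1 - x2, y1 - y2, by push_cast; ring⟩

lemma RD_one (D : ℕ) : (1:ℂ) ∈ RD D := ⟨1, 0, by simp⟩

lemma sqrtD_sq (D : ℕ) : ((Real.sqrt D : ℝ) : ℂ)^2 = (D:ℂ) := by
  norm_cast; rw [Real.sq_sqrt (by positivity)]

lemma alphaD_sq (D : ℕ) (h : D % 4 = 3) :
    (alphaD D)^2 = alphaD D - (((D+1)/4 : ℕ) : ℂ) := by
  have h4 : (4:ℕ) ∣ D + 1 := by omega
  have hc : (((D+1)/4 : ℕ) : ℂ) * 4 = (D:ℂ) + 1 := by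
    exact_mod_cast congrArg (Nat.cast : ℕ → ℂ) (Nat.div_mul_cancel h4)
  have key : Complex.I^2 * ((Real.sqrt D : ℝ) : ℂ)^2 = -(D:ℂ) := by
    rw [Complex.I_sq, sqrtD_sq]; ring
  unfold alphaD
  rw [if_pos h]
  linear_combination key/4 + hc/4

lemma RD_mul {D : ℕ} {a b : ℂ} (ha : a ∈ RD D) (hb : b ∈ RD D) : a * b ∈ RD D := by
  obtain ⟨x1, y1, rfl⟩ := ha
  obtain ⟨x2, y2, rfl⟩ := hb
  by_cases h : D % 4 = 3
  · have hsq := alphaD_sq D h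
    set k : ℕ := (D+1)/4 with hk
    refine ⟨x1*x2 - (k:ℤ) * (y1*y2), x1*y2 + x2*y1 + y1*y2, ?_⟩
    push_cast
    linear_combination (y1:ℂ) * (y2:ℂ) * hsq
  · refine ⟨x1*x2 - D * (y1*y2), x1*y2 + x2*y1, ?_⟩
    have hsq : (alphaD D)^2 = -(D:ℂ) := by
      unfold alphaD
      rw [if_neg h, mul_pow, Complex.I_sq, sqrtD_sq]; ring
    push_cast
    linear_combination (y1:ℂ) * (y2:ℂ) * hsq

lemma one_le_abs_RD {D : ℕ} (hD : 0 < D) {z : ℂ} (hz : z ∈ RD D) (h0 : z ≠ 0) :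
    1 ≤ ‖z‖ := by
  obtain ⟨x, y, rfl⟩ := hz
  obtain ⟨hre, him⟩ := alphaD_re_im D
  have hxy : ¬(x = 0 ∧ y = 0) := by
    rintro ⟨rfl, rfl⟩; simp at h0
  have hs2 : (Real.sqrt D)^2 = (D:ℝ) := Real.sq_sqrt (by positivity)
  have hns : 1 ≤ Complex.normSq ((x:ℂ) + (y:ℂ) * alphaD D) := by
    rw [Complex.normSq_apply]
    simp only [Complex.add_re, Complex.add_im, Complex.mul_re, Complex.mul_im,
      Complex.intCast_re, Complex.intCast_im, hre, him]
    by_cases h : D % 4 = 3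
    · simp only [if_pos h] at hre him ⊢
      have hD3 : 3 ≤ D := by omega
      have h4 : (4:ℕ) ∣ D + 1 := by omega
      set k : ℕ := (D+1)/4 with hk
      have hkc : (k:ℝ) * 4 = (D:ℝ) + 1 := by
        exact_mod_cast congrArg (Nat.cast : ℕ → ℝ) (Nat.div_mul_cancel h4)
      have hint : (1:ℤ) ≤ x^2 + x*y + k*y^2 := by
        rcases eq_or_ne y 0 with rfl | hy
        · have hx : x ≠ 0 := by tauto
          have : 1 ≤ x^2 := by nlinarith [Int.one_le_abs hx, abs_nonneg x, sq_abs x]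
          nlinarith
        · have hy1 : 1 ≤ y^2 := by nlinarith [Int.one_le_abs hy, abs_nonneg y, sq_abs y]
          have hk1 : (1:ℤ) ≤ k := by
            have : 1 ≤ k := Nat.one_le_div_iff (by norm_num) |>.2 (by omega)
            exact_mod_cast this
          nlinarith [sq_nonneg (2*x + y)]
        -- 4*(x²+xy+ky²) = (2x+y)² + (4k-1)y² = (2x+y)² + D y²
      have hcast : ((x:ℝ)^2 + x*y + k*y^2) = ((x^2 + x*y + (k:ℤ)*y^2 : ℤ) : ℝ) := by
        push_cast; ring
      have h1 : (1:ℝ) ≤ (x:ℝ)^2 + x*y + k*y^2 := by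
        rw [hcast]; exact_mod_cast hint
      nlinarith [hs2, hkc, h1]
    · simp only [if_neg h] at hre him ⊢
      have hD1 : (1:ℤ) ≤ D := by exact_mod_cast hD
      have hint : (1:ℤ) ≤ x^2 + D*y^2 := by
        rcases eq_or_ne y 0 with rfl | hy
        · have hx : x ≠ 0 := by tauto
          have : 1 ≤ x^2 := by nlinarith [Int.one_le_abs hx, abs_nonneg x, sq_abs x]
          nlinarith
        · have hy1 : 1 ≤ y^2 := by nlinarith [Int.one_le_abs hy, abs_nonneg y, sq_abs y]
          nlinarith [sq_nonneg x]
      have h1 : (1:ℝ) ≤ (x:ℝ)^2 + D*y^2 := by exact_mod_cast hint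
      nlinarith [hs2, h1]
  nlinarith [Complex.sq_norm ((x:ℂ) + (y:ℂ) * alphaD D), norm_nonneg ((x:ℂ) + (y:ℂ) * alphaD D)]

lemma RD_ball_finite {D : ℕ} (hD : 0 < D) (B : ℝ) :
    Set.Finite {z : ℂ | z ∈ RD D ∧ ‖z‖ ≤ B} := by
  obtain ⟨hre, him⟩ := alphaD_re_im D
  have hs1 : (1:ℝ) ≤ Real.sqrt D := by
    rw [show (1:ℝ) = Real.sqrt 1 by simp]
    exact Real.sqrt_le_sqrt (by exact_mod_cast hD)
  have hre' : |(alphaD D).re| ≤ 1/2 := by rw [hre]; split_ifs <;> norm_num [abs_le]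
  have him' : (1:ℝ)/2 ≤ (alphaD D).im := by rw [him]; split_ifs <;> linarith
  set C : ℤ := max 0 ⌈2*B⌉
  have hfin : Set.Finite {p : ℤ × ℤ | p ∈ Set.Icc (-C, -C) (C, C)} := Set.finite_Icc _ _
  refine Set.Finite.subset (hfin.image (fun p : ℤ × ℤ => (p.1:ℂ) + (p.2:ℂ) * alphaD D)) ?_
  rintro z ⟨⟨x, y, rfl⟩, hz⟩
  refine ⟨(x, y), ?_, rfl⟩
  have hzre : ((x:ℂ) + (y:ℂ) * alphaD D).re = (x:ℝ) + (y:ℝ) * (alphaD D).re := by simp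
  have hzim : ((x:ℂ) + (y:ℂ) * alphaD D).im = (y:ℝ) * (alphaD D).im := by simp
  have habs_re : |((x:ℂ) + (y:ℂ) * alphaD D).re| ≤ B :=
    le_trans (Complex.abs_re_le_norm _) hz
  have habs_im : |((x:ℂ) + (y:ℂ) * alphaD D).im| ≤ B :=
    le_trans (Complex.abs_im_le_norm _) hz
  rw [hzim, abs_mul] at habs_im
  rw [hzre] at habs_re
  have hy : |(y:ℝ)| ≤ 2*B := by
    have him0 : (0:ℝ) < (alphaD D).im := by linarith
    have : |(alphaD D).im| = (alphaD D).im := abs_of_pos him0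
    nlinarith [abs_nonneg (y:ℝ)]
  have hx : |(x:ℝ)| ≤ 2*B := by
    have : |(x:ℝ)| ≤ |(x:ℝ) + y * (alphaD D).re| + |(y:ℝ)| * |(alphaD D).re| := by
      have h := abs_sub ((x:ℝ) + y * (alphaD D).re) ((y:ℝ) * (alphaD D).re)
      rw [abs_mul] at h
      simpa using h
    nlinarith [abs_nonneg (y:ℝ)]
  have hC : (2*B : ℝ) ≤ (C:ℝ) := by
    have h1 : (⌈2*B⌉ : ℤ) ≤ C := le_max_right _ _
    have := Int.le_ceil (2*B)
    calc (2*B:ℝ) ≤ (⌈2*B⌉:ℝ) := this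
    _ ≤ (C:ℝ) := by exact_mod_cast h1
  constructor <;> constructor
  all_goals
    simp only []
    rw [← @Int.cast_le ℝ]
    push_cast
    cases' abs_le.1 hx with hx1 hx2
    cases' abs_le.1 hy with hy1 hy2
  · linarith
  · linarith
  · linarith
  · linarith

lemma key_bound {D : ℕ} (hD : 0 < D) {a b c : ℂ}
    (ha : a ∈ RD D) (hb : b ∈ RD D) (hc : c ∈ RD D)
    (ha0 : a ≠ 0) (ha1 : a ≠ 1) (hb0 : b ≠ 0) (hc0 : c ≠ 0)
    (heq : 1/a + 1/b + 1/c = 1)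
    (h1 : ‖a‖ ≤ ‖b‖) (h2 : ‖b‖ ≤ ‖c‖) :
    ‖a‖ ≤ 18 ∧ ‖b‖ ≤ 18 ∧ ‖c‖ ≤ 18 := by
  set A := ‖a‖ with hA
  set B := ‖b‖ with hB
  set C := ‖c‖ with hC
  have hA1 : 1 ≤ A := one_le_abs_RD hD ha ha0
  have hB1 : 1 ≤ B := one_le_abs_RD hD hb hb0
  have hC1 : 1 ≤ C := one_le_abs_RD hD hc hc0
  have heq' : b*c + a*c + a*b = a*b*c := by
    field_simp at heq; linear_combination heq
  -- |a| ≤ 3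
  have habc : ‖a*b*c‖ = A*B*C := by simp [hA, hB, hC, norm_mul]
  have hA3 : A ≤ 3 := by
    have h := congrArg (‖·‖) heq'
    rw [habc] at h
    have hle : ‖b*c + a*c + a*b‖ ≤ B*C + A*C + A*B := by
      calc ‖b*c + a*c + a*b‖
          ≤ ‖b*c + a*c‖ + ‖a*b‖ := norm_add_le _ _
        _ ≤ ‖b*c‖ + ‖a*c‖ + ‖a*b‖ := by
            linarith [norm_add_le (b*c) (a*c)]
        _ = B*C + A*C + A*B := by simp [hA, hB, hC, norm_mul]
    rw [h] at hle
    nlinarith [mul_le_mul_of_nonneg_right h1 (show (0:ℝ) ≤ C by linarith),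
      mul_le_mul_of_nonneg_left h2 (show (0:ℝ) ≤ A by linarith),
      mul_pos (show (0:ℝ) < B by linarith) (show (0:ℝ) < C by linarith)]
  -- |a - 1| ≥ 1
  have ham1 : 1 ≤ ‖a - 1‖ :=
    one_le_abs_RD hD (RD_sub ha (RD_one D)) (sub_ne_zero.2 ha1)
  -- |b| ≤ 6
  have hid2 : a*c + a*b = (a-1)*(b*c) := by linear_combination heq'
  have hB6 : B ≤ 6 := by
    have h := congrArg (‖·‖) hid2
    have hr : ‖(a-1)*(b*c)‖ = ‖a-1‖ * (B*C) := by
      simp [hB, hC, norm_mul, mul_assoc]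
    rw [hr] at h
    have hle : ‖a*c + a*b‖ ≤ A*C + A*B := by
      calc ‖a*c + a*b‖ ≤ ‖a*c‖ + ‖a*b‖ :=
            norm_add_le _ _
        _ = A*C + A*B := by simp [hA, hB, hC, norm_mul]
    rw [h] at hle
    nlinarith [mul_le_mul_of_nonneg_left h2 (show (0:ℝ) ≤ A by linarith),
      mul_le_mul_of_nonneg_right ham1 (show (0:ℝ) ≤ B*C by nlinarith),
      mul_le_mul_of_nonneg_right hA3 (show (0:ℝ) ≤ C by linarith),
      (show (0:ℝ) < C by linarith)]
  -- |c| ≤ 18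
  have hw : a*b - a - b ∈ RD D := RD_sub (RD_sub (RD_mul ha hb) ha) hb
  have hid3 : c * (a*b - a - b) = a*b := by linear_combination -heq'
  have hw0 : a*b - a - b ≠ 0 := by
    intro h
    rw [h, mul_zero] at hid3
    exact mul_ne_zero ha0 hb0 hid3.symm
  have hw1 : 1 ≤ ‖a*b - a - b‖ := one_le_abs_RD hD hw hw0
  have hC18 : C ≤ 18 := by
    have h := congrArg (‖·‖) hid3
    rw [norm_mul, norm_mul] at h
    nlinarith [mul_le_mul_of_nonneg_left hw1 (show (0:ℝ) ≤ C by linarith),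
      mul_le_mul hA3 hB6 (by linarith) (by norm_num)]
  exact ⟨by linarith, by linarith, hC18⟩

theorem stmt_4 (D : ℕ) (hD : 0 < D) (hsf : Squarefree D) :
    Set.Finite {t : ℂ × ℂ × ℂ |
      t.1 ∈ RD D ∧ t.2.1 ∈ RD D ∧ t.2.2 ∈ RD D ∧
      t.1 ≠ 0 ∧ t.1 ≠ 1 ∧ t.2.1 ≠ 0 ∧ t.2.1 ≠ 1 ∧ t.2.2 ≠ 0 ∧ t.2.2 ≠ 1 ∧
      1 / t.1 + 1 / t.2.1 + 1 / t.2.2 = 1} := by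
  set S : Set ℂ := {z : ℂ | z ∈ RD D ∧ ‖z‖ ≤ 18} with hS
  have hSfin : S.Finite := RD_ball_finite hD 18
  refine Set.Finite.subset (hSfin.prod (hSfin.prod hSfin)) ?_
  rintro ⟨a, b, c⟩ ⟨ha, hb, hc, ha0, ha1, hb0, hb1, hc0, hc1, heq⟩
  have hbnd : ‖a‖ ≤ 18 ∧ ‖b‖ ≤ 18 ∧ ‖c‖ ≤ 18 := by
    rcases le_total (‖a‖) (‖b‖) with h1 | h1 <;>
    rcases le_total (‖b‖) (‖c‖) with h2 | h2 <;>
    rcases le_total (‖a‖) (‖c‖) with h3 | h3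
    · exact key_bound hD ha hb hc ha0 ha1 hb0 hc0 heq h1 h2
    · exact key_bound hD ha hb hc ha0 ha1 hb0 hc0 heq h1 h2
    · obtain ⟨u, v, w⟩ := key_bound hD ha hc hb ha0 ha1 hc0 hb0
        (by linear_combination heq) h3 h2
      exact ⟨u, w, v⟩
    · obtain ⟨u, v, w⟩ := key_bound hD hc ha hb hc0 hc1 ha0 hb0
        (by linear_combination heq) h3 h1
      exact ⟨v, w, u⟩
    · obtain ⟨u, v, w⟩ := key_bound hD hb ha hc hb0 hb1 ha0 hc0
        (by linear_combination heq) h1 h3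
      exact ⟨v, u, w⟩
    · obtain ⟨u, v, w⟩ := key_bound hD hb hc ha hb0 hb1 hc0 ha0
        (by linear_combination heq) h2 h3
      exact ⟨w, u, v⟩
    · obtain ⟨u, v, w⟩ := key_bound hD hc hb ha hc0 hc1 hb0 ha0
        (by linear_combination heq) h2 h1
      exact ⟨w, v, u⟩
    · obtain ⟨u, v, w⟩ := key_bound hD hc hb ha hc0 hc1 hb0 ha0
        (by linear_combination heq) h2 h1
      exact ⟨w, v, u⟩
  exact ⟨⟨ha, hbnd.1⟩, ⟨hb, hbnd.2.1⟩, ⟨hc, hbnd.2.2⟩⟩
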